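/- arXiv:2211.09530 — 2 statements merged into one kernel-verified Lean document; each statement's English description precedes it below -/
import Mathlib

section
/- Suppose F is a Frankenstein graph and P ⊆ F is a path with endpoints s and t. Then there exists a rainbow path P' ⊆ F with the same endpoints s and t. -/
/-! Colored graphs encoded as finite sets of (vertex pair, color) entries. -/

variable {V K : Type*} [DecidableEq V] [DecidableEq K]

/-- Uncolored edges of a colored graph. -/
def uedges (G : Finset (Sym2 V × K)) : Set (Sym2 V) := {e | ∃ c, (e, c) ∈ G}

/-- The underlying simple graph of a colored graph. -/
def graphOf (G : Finset (Sym2 V × K)) : SimpleGraph V :=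
  SimpleGraph.fromEdgeSet (uedges G)

/-- Vertex set of a colored graph. -/
def vertSet (G : Finset (Sym2 V × K)) : Set V := {v | ∃ p ∈ G, v ∈ p.1}

/-- Color set of a colored graph. -/
def colorSet (G : Finset (Sym2 V × K)) : Set K := {c | ∃ e, (e, c) ∈ G}

/-- A colored graph is simple: no loops, and no two edges on the same vertex pair. -/
def Simple (G : Finset (Sym2 V × K)) : Prop :=
  (∀ p ∈ G, ¬ p.1.IsDiag) ∧ ∀ p ∈ G, ∀ q ∈ G, p.1 = q.1 → p = q

/-- A colored graph is rainbow: all edges have pairwise distinct colors. -/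
def Rainbow (G : Finset (Sym2 V × K)) : Prop :=
  ∀ p ∈ G, ∀ q ∈ G, p.2 = q.2 → p = q

/-- The (uncolored) edges of `G` form a cycle. -/
def IsCycleSet (G : Finset (Sym2 V × K)) : Prop :=
  ∃ (u : V) (W : (graphOf G).Walk u u), W.IsCycle ∧ ∀ e, e ∈ uedges G ↔ e ∈ W.edges

/-- The (uncolored) edges of `G` form a path with terminals `s` and `t`. -/
def IsPathSet (G : Finset (Sym2 V × K)) (s t : V) : Prop :=
  ∃ W : (graphOf G).Walk s t, W.IsPath ∧ ∀ e, e ∈ uedges G ↔ e ∈ W.edges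

/-- A bad piece: an almost rainbow theta graph made of three rainbow paths sharing
their two terminals, with at least 6 vertices. -/
def IsBadPiece (G : Finset (Sym2 V × K)) : Prop :=
  Simple G ∧ (colorSet G).ncard = G.card - 1 ∧ 6 ≤ (vertSet G).ncard ∧
  ∃ s t : V, s ≠ t ∧ ∃ P : Fin 3 → Finset (Sym2 V × K),
    G = P 0 ∪ P 1 ∪ P 2 ∧
    (∀ i, IsPathSet (P i) s t ∧ Rainbow (P i)) ∧
    (∀ i j, i ≠ j → vertSet (P i) ∩ vertSet (P j) = {s, t}) ∧
    (∀ i j, i ≠ j → uedges (P i) ∩ uedges (P j) = ∅)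

/-- `G` contains a rainbow even cycle subgraph. -/
def ContainsRainbowEvenCycle (G : Finset (Sym2 V × K)) : Prop :=
  ∃ R ⊆ G, Simple R ∧ Rainbow R ∧ IsCycleSet R ∧ Even R.card

/-- A long rainbow odd cycle: a rainbow cycle of odd length at least 7. -/
def IsLongRainbowOddCycle (G : Finset (Sym2 V × K)) : Prop :=
  Simple G ∧ Rainbow G ∧ IsCycleSet G ∧ Odd G.card ∧ 7 ≤ G.card

/-- A rainbow tree: a rainbow, acyclic, connected colored graph. -/
def IsRainbowTree (G : Finset (Sym2 V × K)) : Prop :=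
  Simple G ∧ Rainbow G ∧ (graphOf G).IsAcyclic ∧
    ∀ u ∈ vertSet G, ∀ v ∈ vertSet G, (graphOf G).Reachable u v

/-- A Frankenstein partition: each part is a long rainbow odd cycle, a bad piece or a
rainbow tree; distinct parts share at most one vertex and have disjoint colors; the
rainbow trees are pairwise vertex-disjoint; and the union contains no rainbow even
cycle subgraph. -/
def IsFrankensteinPartition {m : ℕ} (parts : Fin m → Finset (Sym2 V × K)) : Prop :=
  (∀ i j, i ≠ j → Set.Subsingleton (vertSet (parts i) ∩ vertSet (parts j))) ∧
  (∀ i j, i ≠ j → Disjoint (colorSet (parts i)) (colorSet (parts j))) ∧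
  (∀ i, IsLongRainbowOddCycle (parts i) ∨ IsBadPiece (parts i) ∨ IsRainbowTree (parts i)) ∧
  (∀ i j, i ≠ j → IsRainbowTree (parts i) → IsRainbowTree (parts j) →
    vertSet (parts i) ∩ vertSet (parts j) = ∅) ∧
  ¬ ContainsRainbowEvenCycle (Finset.univ.biUnion parts)

/-- A Frankenstein graph: a colored graph admitting a Frankenstein partition. -/
def IsFrankenstein (G : Finset (Sym2 V × K)) : Prop :=
  ∃ (m : ℕ) (parts : Fin m → Finset (Sym2 V × K)),
    1 ≤ m ∧ G = Finset.univ.biUnion parts ∧ IsFrankensteinPartition parts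

set_option linter.unusedSectionVars false
set_option maxHeartbeats 1000000

/-- `E` is a set of uncolored edges whose `B`-colors are pairwise distinct. -/
def RbE (B : Finset (Sym2 V × K)) (E : Set (Sym2 V)) : Prop :=
  ∀ e ∈ E, ∀ e' ∈ E, ∀ c : K, (e, c) ∈ B → (e', c) ∈ B → e = e'

lemma RbE.mono {B : Finset (Sym2 V × K)} {E E' : Set (Sym2 V)} (h : E' ⊆ E)
    (hE : RbE B E) : RbE B E' :=
  fun e he e' he' c h1 h2 => hE e (h he) e' (h he') c h1 h2

lemma sym2_cases (e : Sym2 V) : ∃ a b : V, e = s(a, b) := by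
  induction e using Sym2.ind with
  | _ a b => exact ⟨a, b, rfl⟩

/-- Split a walk at the first vertex belonging to `S`. -/
lemma walk_split_first {G : SimpleGraph V} {S : Set V} {u t : V} (W : G.Walk u t)
    (h : ∃ v ∈ W.support, v ∈ S) :
    ∃ x, x ∈ S ∧ ∃ (W1 : G.Walk u x) (W2 : G.Walk x t),
      W = W1.append W2 ∧ ∀ v ∈ W1.support, v ∈ S → v = x := by
  induction W with
  | nil =>
    obtain ⟨v, hv, hvS⟩ := h
    simp only [SimpleGraph.Walk.support_nil, List.mem_singleton] at hv
    subst hv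
    exact ⟨v, hvS, SimpleGraph.Walk.nil, SimpleGraph.Walk.nil, rfl, by
      intro w hw _
      simpa using hw⟩
  | @cons a b c hadj q ih =>
    by_cases ha : a ∈ S
    · refine ⟨a, ha, SimpleGraph.Walk.nil, SimpleGraph.Walk.cons hadj q, rfl, ?_⟩
      intro w hw _
      simpa using hw
    · obtain ⟨v, hv, hvS⟩ := h
      rw [SimpleGraph.Walk.support_cons, List.mem_cons] at hv
      rcases hv with rfl | hv
      · exact absurd hvS ha
      · obtain ⟨x, hxS, W1, W2, heq, hcl⟩ := ih ⟨v, hv, hvS⟩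
        refine ⟨x, hxS, SimpleGraph.Walk.cons hadj W1, W2, ?_, ?_⟩
        · rw [SimpleGraph.Walk.cons_append, ← heq]
        · intro w hw hwS
          rw [SimpleGraph.Walk.support_cons, List.mem_cons] at hw
          rcases hw with rfl | hw
          · exact absurd hwS ha
          · exact hcl w hw hwS

/-- Split a walk at the last vertex belonging to `S`. -/
lemma walk_split_last {G : SimpleGraph V} {S : Set V} {u t : V} (W : G.Walk u t)
    (h : ∃ v ∈ W.support, v ∈ S) :
    ∃ y, y ∈ S ∧ ∃ (W1 : G.Walk u y) (W2 : G.Walk y t),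
      W = W1.append W2 ∧ ∀ v ∈ W2.support, v ∈ S → v = y := by
  obtain ⟨x, hxS, A, Bw, heq, hcl⟩ := walk_split_first W.reverse (by
    obtain ⟨v, hv, hvS⟩ := h
    exact ⟨v, by rwa [SimpleGraph.Walk.support_reverse, List.mem_reverse], hvS⟩)
  have hW : W = Bw.reverse.append A.reverse := by
    have h2 : W.reverse.reverse = (A.append Bw).reverse := by rw [heq]
    rw [SimpleGraph.Walk.reverse_reverse] at h2
    rw [h2, SimpleGraph.Walk.reverse_append]
  refine ⟨x, hxS, Bw.reverse, A.reverse, hW, ?_⟩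
  intro v hv hvS
  rw [SimpleGraph.Walk.support_reverse, List.mem_reverse] at hv
  exact hcl v hv hvS


/-- Any two vertices of a bad piece are joined by a walk whose colors are
pairwise distinct. -/
lemma badPiece_rainbow_walk {B : Finset (Sym2 V × K)} (hB : IsBadPiece B)
    {x y : V} (hx : x ∈ vertSet B) (hy : y ∈ vertSet B) :
    ∃ Q : (graphOf B).Walk x y, RbE B {e | e ∈ Q.edges} := by
  classical
  obtain ⟨hSimp, hCol, -, a, b, -, P, hBeq, hPi, -, -⟩ := hB
  choose W hWpath hWedge using fun i => (hPi i).1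
  -- basic containments
  have hPB : ∀ i, P i ⊆ B := by
    intro i
    rw [hBeq]
    fin_cases i
    · exact Finset.subset_union_left.trans Finset.subset_union_left
    · exact Finset.subset_union_right.trans Finset.subset_union_left
    · exact Finset.subset_union_right
  have huB : ∀ i, uedges (P i) ⊆ uedges B := by
    rintro i e ⟨c, hc⟩; exact ⟨c, hPB i hc⟩
  have hPmem : ∀ pr ∈ B, ∃ i, pr ∈ P i := by
    intro pr hpr
    rw [hBeq] at hpr
    rcases Finset.mem_union.mp hpr with h | h
    · rcases Finset.mem_union.mp h with h | h
      · exact ⟨0, h⟩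
      · exact ⟨1, h⟩
    · exact ⟨2, h⟩
  have hBofP : ∀ (i : Fin 3) (e : Sym2 V) (c : K), (e, c) ∈ B → e ∈ uedges (P i) →
      (e, c) ∈ P i := by
    rintro i e c hBc ⟨c', hc'⟩
    have h1 : (e, c') ∈ B := hPB i hc'
    have h2 : ((e, c) : Sym2 V × K) = (e, c') := hSimp.2 _ hBc _ h1 rfl
    rw [h2]; exact hc'
  have hvert : ∀ v ∈ vertSet B, ∃ i, v ∈ vertSet (P i) := by
    rintro v ⟨pr, hpr, hv⟩
    obtain ⟨i, hi⟩ := hPmem pr hpr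
    exact ⟨i, pr, hi, hv⟩
  have hsup : ∀ (i : Fin 3), ∀ v ∈ vertSet (P i), v ∈ (W i).support := by
    rintro i v ⟨pr, hpr, hv⟩
    obtain ⟨w, hw⟩ := Sym2.mem_iff_exists.mp hv
    have he : pr.1 ∈ (W i).edges := (hWedge i pr.1).mp ⟨pr.2, by simpa using hpr⟩
    rw [hw] at he
    exact (W i).fst_mem_support_of_mem_edges he
  have hedgeP : ∀ (i : Fin 3) {u v : V} (Z : (graphOf (P i)).Walk u v),
      ∀ e ∈ Z.edges, e ∈ uedges (P i) := by
    intro i u v Z e he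
    have h1 := Z.edges_subset_edgeSet he
    rw [graphOf, SimpleGraph.edgeSet_fromEdgeSet] at h1
    exact h1.1
  have htrans : ∀ (i : Fin 3) {u v : V} (Z : (graphOf (P i)).Walk u v),
      ∀ e ∈ Z.edges, e ∈ (graphOf B).edgeSet := by
    intro i u v Z e he
    have h1 := Z.edges_subset_edgeSet he
    rw [graphOf, SimpleGraph.edgeSet_fromEdgeSet] at h1 ⊢
    exact ⟨huB i h1.1, h1.2⟩
  have hPirb : ∀ (i : Fin 3) (E : Set (Sym2 V)), (∀ e ∈ E, e ∈ uedges (P i)) →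
      RbE B E := by
    intro i E hE e he e' he' c hec he'c
    have h1 : (e, c) ∈ P i := hBofP i e c hec (hE e he)
    have h2 : (e', c) ∈ P i := hBofP i e' c he'c (hE e' he')
    exact congrArg Prod.fst ((hPi i).2 _ h1 _ h2 rfl)
  by_cases hsame : ∃ i, x ∈ vertSet (P i) ∧ y ∈ vertSet (P i)
  · -- both on the same path
    obtain ⟨i, hxi, hyi⟩ := hsame
    have hxs : x ∈ (W i).support := hsup i x hxi
    have hys : y ∈ (W i).support := hsup i y hyi
    set Q0 : (graphOf (P i)).Walk x y :=
      ((W i).takeUntil x hxs).reverse.append ((W i).takeUntil y hys) with hQ0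
    refine ⟨Q0.transfer (graphOf B) (fun e he => htrans i Q0 e he), ?_⟩
    have hEsub : ∀ e ∈ {e | e ∈ (Q0.transfer (graphOf B)
        (fun e he => htrans i Q0 e he)).edges}, e ∈ uedges (P i) := by
      intro e he
      rw [Set.mem_setOf_eq, SimpleGraph.Walk.edges_transfer] at he
      exact hedgeP i Q0 e he
    exact hPirb i _ hEsub
  · -- on two different paths
    obtain ⟨i, hxi⟩ := hvert x hx
    obtain ⟨j, hyj⟩ := hvert y hy
    have hij : i ≠ j := by
      rintro rfl; exact hsame ⟨i, hxi, hyj⟩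
    -- the unique color collision
    have hBne : B.Nonempty := by
      obtain ⟨pr, hpr, -⟩ := hx; exact ⟨pr, hpr⟩
    have hset : colorSet B = ↑(B.image Prod.snd) := by
      ext c
      simp only [colorSet, Set.mem_setOf_eq, Finset.coe_image, Set.mem_image,
        Finset.mem_coe]
      constructor
      · rintro ⟨e, he⟩; exact ⟨(e, c), he, rfl⟩
      · rintro ⟨pr, hpr, rfl⟩; exact ⟨pr.1, by simpa using hpr⟩
    have himg : (B.image Prod.snd).card = B.card - 1 := by
      rw [← Set.ncard_coe_finset, ← hset, hCol]
    have hlt : (B.image Prod.snd).card < B.card := by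
      rw [himg]
      exact Nat.sub_lt (Finset.card_pos.mpr hBne) one_pos
    obtain ⟨p, hpB, q, hqB, hpq, hc⟩ :=
      Finset.exists_ne_map_eq_of_card_lt_of_maps_to hlt
        (fun pr h => Finset.mem_image_of_mem Prod.snd h)
    -- injectivity away from q
    have himg2 : (B.erase q).image Prod.snd = B.image Prod.snd := by
      apply Finset.Subset.antisymm
        (Finset.image_subset_image (Finset.erase_subset _ _))
      intro c hcm
      obtain ⟨r, hr, rfl⟩ := Finset.mem_image.mp hcm
      by_cases hrq : r = q
      · exact Finset.mem_image.mpr ⟨p, Finset.mem_erase.mpr ⟨hpq, hpB⟩, by rw [hc, hrq]⟩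
      · exact Finset.mem_image.mpr ⟨r, Finset.mem_erase.mpr ⟨hrq, hr⟩, rfl⟩
    have hcard2 : ((B.erase q).image Prod.snd).card = (B.erase q).card := by
      rw [himg2, himg, Finset.card_erase_of_mem hqB]
    have hinj : Set.InjOn (Prod.snd : Sym2 V × K → K) (↑(B.erase q) : Set (Sym2 V × K)) := Finset.injOn_of_card_image_eq hcard2
    have hUniq : ∀ r ∈ B, r ≠ p → r ≠ q → ∀ s' ∈ B, r.2 = s'.2 → r = s' := by
      intro r hr hrp hrq s' hs' hcs
      by_cases hs'q : s' = q
      · exfalso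
        apply hrp
        apply hinj (Finset.mem_coe.mpr (Finset.mem_erase.mpr ⟨hrq, hr⟩))
          (Finset.mem_coe.mpr (Finset.mem_erase.mpr ⟨hpq, hpB⟩))
        rw [hcs, hs'q, ← hc]
      · exact hinj (Finset.mem_coe.mpr (Finset.mem_erase.mpr ⟨hrq, hr⟩))
          (Finset.mem_coe.mpr (Finset.mem_erase.mpr ⟨hs'q, hs'⟩)) hcs
    -- avoiding one of the two collision edges gives distinct colors
    have hRbAvoid : ∀ r : Sym2 V × K, (r = p ∨ r = q) → ∀ E : Set (Sym2 V),
        (∀ e ∈ E, e ≠ r.1) → RbE B E := by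
      intro r hr E hE e he e' he' c hec he'c
      have h1 : ((e, c) : Sym2 V × K) ≠ r := fun h => hE e he (by rw [← h])
      have h2 : ((e', c) : Sym2 V × K) ≠ r := fun h => hE e' he' (by rw [← h])
      rcases hr with rfl | rfl
      · by_cases hq1 : ((e, c) : Sym2 V × K) = q
        · by_cases hq2 : ((e', c) : Sym2 V × K) = q
          · have := hq1.trans hq2.symm
            exact congrArg Prod.fst this
          · exfalso
            exact hq2 (hUniq (e', c) he'c h2 hq2 q hqB
              (by rw [← hq1]))
        · exact congrArg Prod.fst (hUniq (e, c) hec h1 hq1 (e', c) he'c rfl)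
      · by_cases hp1 : ((e, c) : Sym2 V × K) = p
        · by_cases hp2 : ((e', c) : Sym2 V × K) = p
          · exact congrArg Prod.fst (hp1.trans hp2.symm)
          · exfalso
            exact hp2 (hUniq (e', c) he'c hp2 h2 p hpB (by rw [← hp1]))
        · exact congrArg Prod.fst (hUniq (e, c) hec hp1 h1 (e', c) he'c rfl)
    -- choose the collision edge not lying on the j-side
    have hone : ¬ (p.1 ∈ uedges (P j) ∧ q.1 ∈ uedges (P j)) := by
      rintro ⟨h1, h2⟩
      have hp' : p ∈ P j := by
        have := hBofP j p.1 p.2 (by simpa using hpB) h1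
        simpa using this
      have hq' : q ∈ P j := by
        have := hBofP j q.1 q.2 (by simpa using hqB) h2
        simpa using this
      exact hpq ((hPi j).2 _ hp' _ hq' hc)
    obtain ⟨r, hrOr, hrj⟩ : ∃ r : Sym2 V × K, (r = p ∨ r = q) ∧ r.1 ∉ uedges (P j) := by
      by_cases h1 : p.1 ∈ uedges (P j)
      · exact ⟨q, Or.inr rfl, fun h2 => hone ⟨h1, h2⟩⟩
      · exact ⟨p, Or.inl rfl, h1⟩
    -- route on the i side avoiding r.1
    have hxs : x ∈ (W i).support := hsup i x hxi
    have hys : y ∈ (W j).support := hsup j y hyj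
    have hTi : (W i).edges.Nodup := (hWpath i).isTrail.edges_nodup
    have hsplitE : (((W i).takeUntil x hxs).append ((W i).dropUntil x hxs)).edges
        = (W i).edges := by rw [SimpleGraph.Walk.take_spec]
    have hnd : (((W i).takeUntil x hxs).edges ++ ((W i).dropUntil x hxs).edges).Nodup := by
      rw [← SimpleGraph.Walk.edges_append, hsplitE]; exact hTi
    have hdisj := (List.nodup_append.mp hnd).2.2
    by_cases htk : r.1 ∈ ((W i).takeUntil x hxs).edges
    · -- go from x to b on the i side, then from b to y on the j side
      set Qx : (graphOf (P i)).Walk x b := (W i).dropUntil x hxs with hQx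
      set Qy : (graphOf (P j)).Walk b y := ((W j).dropUntil y hys).reverse with hQy
      have havoid : ∀ e ∈ Qx.edges, e ≠ r.1 := by
        intro e he heq
        exact hdisj _ htk _ (heq ▸ he) rfl
      refine ⟨(Qx.transfer (graphOf B) (fun e he => htrans i Qx e he)).append
        (Qy.transfer (graphOf B) (fun e he => htrans j Qy e he)),
        hRbAvoid r hrOr _ ?_⟩
      intro e he
      rw [Set.mem_setOf_eq, SimpleGraph.Walk.edges_append,
        SimpleGraph.Walk.edges_transfer, SimpleGraph.Walk.edges_transfer,
        List.mem_append] at he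
      rcases he with he | he
      · exact havoid e he
      · intro heq
        exact hrj (heq ▸ hedgeP j Qy e he)
    · -- go from x to a on the i side, then from a to y on the j side
      set Qx : (graphOf (P i)).Walk x a := ((W i).takeUntil x hxs).reverse with hQx
      set Qy : (graphOf (P j)).Walk a y := (W j).takeUntil y hys with hQy
      have havoid : ∀ e ∈ Qx.edges, e ≠ r.1 := by
        intro e he heq
        rw [hQx, SimpleGraph.Walk.edges_reverse, List.mem_reverse] at he
        exact htk (heq ▸ he)
      refine ⟨(Qx.transfer (graphOf B) (fun e he => htrans i Qx e he)).append
        (Qy.transfer (graphOf B) (fun e he => htrans j Qy e he)),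
        hRbAvoid r hrOr _ ?_⟩
      intro e he
      rw [Set.mem_setOf_eq, SimpleGraph.Walk.edges_append,
        SimpleGraph.Walk.edges_transfer, SimpleGraph.Walk.edges_transfer,
        List.mem_append] at he
      rcases he with he | he
      · exact havoid e he
      · intro heq
        exact hrj (heq ▸ hedgeP j Qy e he)



lemma parts_noShare {m : ℕ} {parts : Fin m → Finset (Sym2 V × K)}
    (hV : ∀ i j, i ≠ j → Set.Subsingleton (vertSet (parts i) ∩ vertSet (parts j)))
    (hS : ∀ i, Simple (parts i)) {i j : Fin m} (hij : i ≠ j) :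
    ∀ e, e ∈ uedges (parts i) → e ∈ uedges (parts j) → False := by
  intro e
  obtain ⟨u, v, rfl⟩ := sym2_cases e
  rintro ⟨c1, hc1⟩ ⟨c2, hc2⟩
  have hnd : ¬ (s(u, v) : Sym2 V).IsDiag := (hS i).1 _ hc1
  have huv : u ≠ v := by
    intro h; exact hnd (by rw [h]; exact Sym2.mk_isDiag_iff.mpr rfl)
  have hu : u ∈ vertSet (parts i) ∩ vertSet (parts j) :=
    ⟨⟨_, hc1, Sym2.mem_mk_left u v⟩, ⟨_, hc2, Sym2.mem_mk_left u v⟩⟩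
  have hv' : v ∈ vertSet (parts i) ∩ vertSet (parts j) :=
    ⟨⟨_, hc1, Sym2.mem_mk_right u v⟩, ⟨_, hc2, Sym2.mem_mk_right u v⟩⟩
  exact huv (hV i j hij hu hv')

lemma F_simple {m : ℕ} {parts : Fin m → Finset (Sym2 V × K)}
    (hV : ∀ i j, i ≠ j → Set.Subsingleton (vertSet (parts i) ∩ vertSet (parts j)))
    (hS : ∀ i, Simple (parts i)) {F : Finset (Sym2 V × K)}
    (hFeq : F = Finset.univ.biUnion parts) :
    ∀ pr ∈ F, ∀ qr ∈ F, pr.1 = qr.1 → pr = qr := by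
  intro pr hpr qr hqr h1
  rw [hFeq, Finset.mem_biUnion] at hpr hqr
  obtain ⟨i, -, hi⟩ := hpr
  obtain ⟨j, -, hj⟩ := hqr
  by_cases hij : i = j
  · subst hij
    exact (hS i).2 pr hi qr hj h1
  · exact absurd h1 (fun h1 => parts_noShare hV hS hij pr.1
      ⟨pr.2, by simpa using hi⟩ ⟨qr.2, by rw [h1]; simpa using hj⟩)

lemma frankenstein_rainbow_walk {m : ℕ} {parts : Fin m → Finset (Sym2 V × K)}
    (hV : ∀ i j, i ≠ j → Set.Subsingleton (vertSet (parts i) ∩ vertSet (parts j)))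
    (hC : ∀ i j, i ≠ j → Disjoint (colorSet (parts i)) (colorSet (parts j)))
    (hKind : ∀ i, IsLongRainbowOddCycle (parts i) ∨ IsBadPiece (parts i) ∨
      IsRainbowTree (parts i))
    {F : Finset (Sym2 V × K)} (hFeq : F = Finset.univ.biUnion parts)
    {s t : V} (W0 : (graphOf F).Walk s t) :
    ∃ W' : (graphOf F).Walk s t, W'.IsPath ∧ RbE F {e | e ∈ W'.edges} := by
  classical
  have hSimpPart : ∀ i, Simple (parts i) := by
    intro i; rcases hKind i with h | h | h
    exacts [h.1, h.1, h.1]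
  have hFsimp := F_simple hV hSimpPart hFeq
  have hPartsSub : ∀ i, parts i ⊆ F := by
    intro i pr h
    rw [hFeq, Finset.mem_biUnion]
    exact ⟨i, Finset.mem_univ i, h⟩
  have hPartOf : ∀ pr ∈ F, ∃ i, pr ∈ parts i := by
    intro pr hpr
    rw [hFeq, Finset.mem_biUnion] at hpr
    obtain ⟨i, -, hi⟩ := hpr
    exact ⟨i, hi⟩
  -- extraction of a rainbow path once every part is locally rainbow along W
  have extract : ∀ (W : (graphOf F).Walk s t),
      (∀ i : Fin m, RbE F {e | e ∈ W.edges ∧ e ∈ uedges (parts i)}) →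
      ∃ W' : (graphOf F).Walk s t, W'.IsPath ∧ RbE F {e | e ∈ W'.edges} := by
    intro W hall
    refine ⟨W.bypass, W.bypass_isPath, ?_⟩
    intro e he e' he' c hec he'c
    have heW : e ∈ W.edges := W.edges_bypass_subset he
    have he'W : e' ∈ W.edges := W.edges_bypass_subset he'
    obtain ⟨i, hi⟩ := hPartOf (e, c) hec
    obtain ⟨j, hj⟩ := hPartOf (e', c) he'c
    by_cases hij : i = j
    · subst hij
      exact hall i e ⟨heW, c, hi⟩ e' ⟨he'W, c, hj⟩ c hec he'c
    · exact absurd (⟨e', hj⟩ : c ∈ colorSet (parts j))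
        (Set.disjoint_left.mp (hC i j hij) ⟨e, hi⟩)
  -- main induction on the number of violating parts
  have main : ∀ (n : ℕ) (W : (graphOf F).Walk s t),
      ({i : Fin m | ¬ RbE F {e | e ∈ W.edges ∧ e ∈ uedges (parts i)}}).ncard ≤ n →
      ∃ W' : (graphOf F).Walk s t, W'.IsPath ∧ RbE F {e | e ∈ W'.edges} := by
    intro n
    induction n with
    | zero =>
      intro W hW
      apply extract W
      intro i
      by_contra hi
      have : i ∈ {i : Fin m | ¬ RbE F {e | e ∈ W.edges ∧ e ∈ uedges (parts i)}} := hi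
      rw [(Set.ncard_eq_zero (Set.toFinite _)).mp (Nat.le_zero.mp hW)] at this
      exact this
    | succ n ih =>
      intro W hW
      by_cases hall : ∀ i : Fin m, RbE F {e | e ∈ W.edges ∧ e ∈ uedges (parts i)}
      · exact extract W hall
      rcases not_forall.mp hall with ⟨i, hi⟩
      -- the violating part is a bad piece
      have hrainrb : Rainbow (parts i) →
          RbE F {e | e ∈ W.edges ∧ e ∈ uedges (parts i)} := by
        rintro hR e ⟨-, c1, hc1⟩ e' ⟨-, c2, hc2⟩ c hec he'c
        have h1 : (e, c) ∈ parts i := by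
          have h := hFsimp _ (hPartsSub i hc1) _ hec rfl
          exact h ▸ hc1
        have h2 : (e', c) ∈ parts i := by
          have h := hFsimp _ (hPartsSub i hc2) _ he'c rfl
          exact h ▸ hc2
        exact congrArg Prod.fst (hR _ h1 _ h2 rfl)
      have hBad : IsBadPiece (parts i) := by
        rcases hKind i with h | h | h
        · exact absurd (hrainrb h.2.1) hi
        · exact h
        · exact absurd (hrainrb h.2.1) hi
      -- find a vertex of W in the part
      have hex0 : ∃ e, e ∈ W.edges ∧ e ∈ uedges (parts i) := by
        by_contra hno
        push_neg at hno
        apply hi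
        rintro e ⟨he1, he2⟩ e' he' c hec he'c
        exact absurd he2 (hno e he1)
      have hex : ∃ v ∈ W.support, v ∈ vertSet (parts i) := by
        obtain ⟨e, heW, heU⟩ := hex0
        obtain ⟨a, b, rfl⟩ := sym2_cases e
        obtain ⟨c, hc⟩ := heU
        exact ⟨a, W.fst_mem_support_of_mem_edges heW, ⟨_, hc, Sym2.mem_mk_left a b⟩⟩
      obtain ⟨x, hxS, W1, Wr, heq1, hcl1⟩ := walk_split_first W hex
      obtain ⟨y, hyS, Wm, W2, heq2, hcl2⟩ :=
        walk_split_last Wr ⟨x, Wr.start_mem_support, hxS⟩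
      obtain ⟨Q, hQrb⟩ := badPiece_rainbow_walk hBad hxS hyS
      have htransQ : ∀ e ∈ Q.edges, e ∈ (graphOf F).edgeSet := by
        intro e he
        have h1 := Q.edges_subset_edgeSet he
        rw [graphOf, SimpleGraph.edgeSet_fromEdgeSet] at h1 ⊢
        obtain ⟨c, hc⟩ := h1.1
        exact ⟨⟨c, hPartsSub i hc⟩, h1.2⟩
      set QF : (graphOf F).Walk x y := Q.transfer (graphOf F) htransQ with hQF
      set W'' : (graphOf F).Walk s t := W1.append (QF.append W2) with hW''
      have hQedges : QF.edges = Q.edges := SimpleGraph.Walk.edges_transfer _ _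
      have hQu : ∀ e ∈ QF.edges, e ∈ uedges (parts i) := by
        intro e he
        rw [hQedges] at he
        have h1 := Q.edges_subset_edgeSet he
        rw [graphOf, SimpleGraph.edgeSet_fromEdgeSet] at h1
        exact h1.1
      have hW1i : ∀ e ∈ W1.edges, e ∉ uedges (parts i) := by
        intro e he hu
        obtain ⟨a, b, rfl⟩ := sym2_cases e
        obtain ⟨c, hc⟩ := hu
        have ha := hcl1 a (W1.fst_mem_support_of_mem_edges he)
          ⟨_, hc, Sym2.mem_mk_left a b⟩
        have hb := hcl1 b (W1.snd_mem_support_of_mem_edges he)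
          ⟨_, hc, Sym2.mem_mk_right a b⟩
        have hadj := W1.edges_subset_edgeSet he
        rw [SimpleGraph.mem_edgeSet] at hadj
        exact hadj.ne (ha.trans hb.symm)
      have hW2i : ∀ e ∈ W2.edges, e ∉ uedges (parts i) := by
        intro e he hu
        obtain ⟨a, b, rfl⟩ := sym2_cases e
        obtain ⟨c, hc⟩ := hu
        have ha := hcl2 a (W2.fst_mem_support_of_mem_edges he)
          ⟨_, hc, Sym2.mem_mk_left a b⟩
        have hb := hcl2 b (W2.snd_mem_support_of_mem_edges he)
          ⟨_, hc, Sym2.mem_mk_right a b⟩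
        have hadj := W2.edges_subset_edgeSet he
        rw [SimpleGraph.mem_edgeSet] at hadj
        exact hadj.ne (ha.trans hb.symm)
      have hQrbF : RbE F {e | e ∈ QF.edges} := by
        intro e he e' he' c hec he'c
        rw [Set.mem_setOf_eq, hQedges] at he he'
        obtain ⟨cB, hcB⟩ := hQu e (by rwa [hQedges])
        obtain ⟨cB', hcB'⟩ := hQu e' (by rwa [hQedges])
        have h1 : (e, c) ∈ parts i := by
          have h := hFsimp _ (hPartsSub i hcB) _ hec rfl
          exact h ▸ hcB
        have h2 : (e', c) ∈ parts i := by
          have h := hFsimp _ (hPartsSub i hcB') _ he'c rfl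
          exact h ▸ hcB'
        exact hQrb e he e' he' c h1 h2
      have hWedges : ∀ e, e ∈ W''.edges ↔
          (e ∈ W1.edges ∨ e ∈ QF.edges ∨ e ∈ W2.edges) := by
        intro e
        rw [hW'', SimpleGraph.Walk.edges_append, SimpleGraph.Walk.edges_append,
          List.mem_append, List.mem_append]
      have hWold : ∀ e, (e ∈ W1.edges ∨ e ∈ W2.edges) → e ∈ W.edges := by
        intro e he
        rw [heq1, SimpleGraph.Walk.edges_append]
        rcases he with h | h
        · exact List.mem_append.mpr (Or.inl h)
        · refine List.mem_append.mpr (Or.inr ?_)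
          rw [heq2, SimpleGraph.Walk.edges_append]
          exact List.mem_append.mpr (Or.inr h)
      have hsub : {j : Fin m | ¬ RbE F {e | e ∈ W''.edges ∧ e ∈ uedges (parts j)}} ⊆
          {j : Fin m | ¬ RbE F {e | e ∈ W.edges ∧ e ∈ uedges (parts j)}} \ {i} := by
        intro j hj
        rw [Set.mem_setOf_eq] at hj
        have hji : j ≠ i := by
          rintro rfl
          apply hj
          rintro e ⟨heW, heU⟩ e' ⟨he'W, he'U⟩ c hec he'c
          have hQe : e ∈ QF.edges := by
            rcases (hWedges e).mp heW with h | h | h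
            · exact absurd heU (hW1i e h)
            · exact h
            · exact absurd heU (hW2i e h)
          have hQe' : e' ∈ QF.edges := by
            rcases (hWedges e').mp he'W with h | h | h
            · exact absurd he'U (hW1i e' h)
            · exact h
            · exact absurd he'U (hW2i e' h)
          exact hQrbF e hQe e' hQe' c hec he'c
        have hconv : ∀ e, e ∈ W''.edges → e ∈ uedges (parts j) → e ∈ W.edges := by
          intro e he heU
          rcases (hWedges e).mp he with h | h | h
          · exact hWold e (Or.inl h)
          · exact (parts_noShare hV hSimpPart (Ne.symm hji) e (hQu e h) heU).elim
          · exact hWold e (Or.inr h)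
        refine ⟨?_, by simpa using hji⟩
        rw [Set.mem_setOf_eq]
        intro hrb
        apply hj
        rintro e ⟨heW, heU⟩ e' ⟨he'W, he'U⟩ c hec he'c
        exact hrb e ⟨hconv e heW heU, heU⟩ e' ⟨hconv e' he'W he'U, he'U⟩ c hec he'c
      have hiW : i ∈ {j : Fin m | ¬ RbE F {e | e ∈ W.edges ∧ e ∈ uedges (parts j)}} := hi
      have hle : ({j : Fin m | ¬ RbE F {e | e ∈ W''.edges ∧
          e ∈ uedges (parts j)}}).ncard ≤ n := by
        have h1 := Set.ncard_le_ncard hsub (Set.toFinite _)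
        rw [Set.ncard_diff_singleton_of_mem hiW] at h1
        omega
      exact ih W'' hle
  exact main _ W0 le_rfl

/-- If `F` is a Frankenstein graph and `P ⊆ F` is a path with
terminals `s` and `t`, then there is a rainbow path `P' ⊆ F` with terminals `s, t`. -/
theorem frankenstein_rainbow_path (F : Finset (Sym2 V × K)) (hF : IsFrankenstein F)
    (P : Finset (Sym2 V × K)) (hPF : P ⊆ F) (s t : V) (hP : IsPathSet P s t) :
    ∃ P' ⊆ F, Rainbow P' ∧ IsPathSet P' s t := by
  classical
  obtain ⟨m, parts, -, hFeq, hV, hC, hKind, -, -⟩ := hF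
  obtain ⟨Wp, hWpPath, hWpE⟩ := hP
  have hSimpPart : ∀ i, Simple (parts i) := by
    intro i; rcases hKind i with h | h | h
    exacts [h.1, h.1, h.1]
  have hFsimp := F_simple hV hSimpPart hFeq
  have hPEsub : ∀ e ∈ Wp.edges, e ∈ (graphOf F).edgeSet := by
    intro e he
    have h1 := Wp.edges_subset_edgeSet he
    rw [graphOf, SimpleGraph.edgeSet_fromEdgeSet] at h1 ⊢
    obtain ⟨c, hc⟩ := h1.1
    exact ⟨⟨c, hPF hc⟩, h1.2⟩
  obtain ⟨W', hW'path, hW'rb⟩ := frankenstein_rainbow_walk hV hC hKind hFeq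
    (Wp.transfer (graphOf F) hPEsub)
  refine ⟨F.filter (fun pr => pr.1 ∈ W'.edges), Finset.filter_subset _ _, ?_, ?_⟩
  · intro pr hpr qr hqr hsnd
    rw [Finset.mem_filter] at hpr hqr
    have h1 : pr.1 = qr.1 := by
      apply hW'rb pr.1 hpr.2 qr.1 hqr.2 pr.2
      · simpa using hpr.1
      · rw [hsnd]; simpa using hqr.1
    exact hFsimp pr hpr.1 qr hqr.1 h1
  · have hedgesP' : ∀ e, e ∈ uedges (F.filter (fun pr => pr.1 ∈ W'.edges)) ↔
        e ∈ W'.edges := by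
      intro e
      constructor
      · rintro ⟨c, hc⟩
        rw [Finset.mem_filter] at hc
        exact hc.2
      · intro he
        have h1 := W'.edges_subset_edgeSet he
        rw [graphOf, SimpleGraph.edgeSet_fromEdgeSet] at h1
        obtain ⟨c, hc⟩ := h1.1
        exact ⟨c, Finset.mem_filter.mpr ⟨hc, he⟩⟩
    have htr : ∀ e ∈ W'.edges,
        e ∈ (graphOf (F.filter (fun pr => pr.1 ∈ W'.edges))).edgeSet := by
      intro e he
      have h1 := W'.edges_subset_edgeSet he
      rw [graphOf, SimpleGraph.edgeSet_fromEdgeSet] at h1 ⊢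
      exact ⟨(hedgesP' e).mpr he, h1.2⟩
    refine ⟨W'.transfer _ htr, hW'path.transfer _, ?_⟩
    intro e
    rw [SimpleGraph.Walk.edges_transfer]
    exact hedgesP' e
end

section
/- Suppose a rainbow 5-cycle C on vertices v1,...,v5 lies in a multigraph with no rainbow 4-cycle, where edge ei of C has color α_i, and for each i, the edge e_i^- of color α_i adjacent to ei at v_i (distinct from ei, with α_i ≠ α_j for i ≠ j) has both endpoints in {v1,...,v5}. Then V(e_i^-) = {v_{i-1}, v_i} or {v_i, v_{i+3}} (indices mod 5); symmetrically, the edge e_i^+ of color α_i adjacent at v_{i+1} satisfies V(e_i^+) = {v_{i+1}, v_{i+2}} or {v_{i+1}, v_{i+3}}. -/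
open SimpleGraph

private lemma zmod5_cases (z : ZMod 5) : z = 0 ∨ z = 1 ∨ z = 2 ∨ z = 3 ∨ z = 4 := by
  revert z; decide

private lemma zmod5_shift_ne (i : ZMod 5) {k : ZMod 5} (hk : k ≠ 0) : i ≠ i + k := by
  rw [Ne, left_eq_add]; exact hk

private lemma zmod5_add_ne (i : ZMod 5) {a b : ZMod 5} (h : a ≠ b) : i + a ≠ i + b :=
  fun hh => h (add_left_cancel hh)

private lemma four_cycle_exists {V ι : Type*} (D : ι → SimpleGraph V)
    (a b c d : V) (c0 c1 c2 c3 : ι)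
    (hab : a ≠ b) (hac : a ≠ c) (had : a ≠ d) (hbc : b ≠ c) (hbd : b ≠ d) (hcd : c ≠ d)
    (h01 : c0 ≠ c1) (h02 : c0 ≠ c2) (h03 : c0 ≠ c3) (h12 : c1 ≠ c2) (h13 : c1 ≠ c3)
    (h23 : c2 ≠ c3)
    (e0 : s(a,b) ∈ (D c0).edgeSet) (e1 : s(b,c) ∈ (D c1).edgeSet)
    (e2 : s(c,d) ∈ (D c2).edgeSet) (e3 : s(d,a) ∈ (D c3).edgeSet) :
    ∃ (u : V) (W : (⨆ i, D i).Walk u u) (σ : Sym2 V → ι),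
      W.IsCycle ∧ W.length = 4 ∧
      (∀ e ∈ W.edges, e ∈ (D (σ e)).edgeSet) ∧
      (∀ e ∈ W.edges, ∀ f ∈ W.edges, σ e = σ f → e = f) := by
  classical
  have a01 : (⨆ i, D i).Adj a b := le_iSup D c0 e0
  have a12 : (⨆ i, D i).Adj b c := le_iSup D c1 e1
  have a23 : (⨆ i, D i).Adj c d := le_iSup D c2 e2
  have a30 : (⨆ i, D i).Adj d a := le_iSup D c3 e3
  set σ : Sym2 V → ι := fun e =>
    if e = s(a,b) then c0 else if e = s(b,c) then c1 else if e = s(c,d) then c2 else c3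
    with hσdef
  have hσ0 : σ s(a,b) = c0 := by simp [hσdef]
  have hσ1 : σ s(b,c) = c1 := by
    simp [hσdef, Sym2.eq_iff, hbc, hab.symm, Ne.symm hac]
  have hσ2 : σ s(c,d) = c2 := by
    simp [hσdef, Sym2.eq_iff, hcd, hac.symm, hbd.symm, Ne.symm hbc, Ne.symm had]
  have hσ3 : σ s(d,a) = c3 := by
    simp [hσdef, Sym2.eq_iff, had.symm, hab, hbd, hac, Ne.symm hcd, Ne.symm hbd]
  refine ⟨a, .cons a01 (.cons a12 (.cons a23 (.cons a30 .nil))), σ, ?_, rfl, ?_, ?_⟩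
  · constructor
    · constructor
      · simp [Walk.isTrail_def, List.nodup_cons, Sym2.eq_iff]
        tauto
      · simp
    · simp [List.nodup_cons]
      tauto
  · intro e he
    simp [Walk.edges] at he
    rcases he with rfl | rfl | rfl | rfl
    · rw [hσ0]; exact e0
    · rw [hσ1]; exact e1
    · rw [hσ2]; exact e2
    · rw [hσ3]; exact e3
  · intro e he f hf hef
    simp [Walk.edges] at he hf
    rcases he with rfl | rfl | rfl | rfl <;> rcases hf with rfl | rfl | rfl | rfl <;>
      simp only [hσ0, hσ1, hσ2, hσ3] at hef <;> simp_all

/-- Let `C` be a rainbow 5-cycle on vertices `v 0, …, v 4` (indices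
mod 5) inside a family `D` of monochromatic graphs with no rainbow 4-cycle, where the
edge `e i = s(v i, v (i+1))` has color `α i`.  If an edge `f` of color `α i` other than
`e i` is incident to `v i` and has both endpoints in `{v 0, …, v 4}`, then
`f = s(v (i−1), v i)` or `f = s(v i, v (i+3))`; symmetrically, such an edge `g`
incident to `v (i+1)` satisfies `g = s(v (i+1), v (i+2))` or `g = s(v (i+1), v (i+3))`. -/
theorem rainbow_five_cycle_neighbor_edge_positions {V ι : Type*}
    (D : ι → SimpleGraph V)
    (hno4 : ¬ ∃ (u : V) (W : (⨆ i, D i).Walk u u) (σ : Sym2 V → ι),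
      W.IsCycle ∧ W.length = 4 ∧
      (∀ e ∈ W.edges, e ∈ (D (σ e)).edgeSet) ∧
      (∀ e ∈ W.edges, ∀ f ∈ W.edges, σ e = σ f → e = f))
    (v : ZMod 5 → V) (hv : Function.Injective v)
    (α : ZMod 5 → ι) (hα : Function.Injective α)
    (he : ∀ i, s(v i, v (i + 1)) ∈ (D (α i)).edgeSet)
    (i : ZMod 5) :
    (∀ f ∈ (D (α i)).edgeSet, f ≠ s(v i, v (i + 1)) → v i ∈ f →
      (∀ x ∈ f, ∃ j, x = v j) →
      f = s(v (i - 1), v i) ∨ f = s(v i, v (i + 3))) ∧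
    (∀ g ∈ (D (α i)).edgeSet, g ≠ s(v i, v (i + 1)) → v (i + 1) ∈ g →
      (∀ x ∈ g, ∃ j, x = v j) →
      g = s(v (i + 1), v (i + 2)) ∨ g = s(v (i + 1), v (i + 3))) := by
  have extract : ∀ (m : ZMod 5) (f : Sym2 V), f ∈ (D (α i)).edgeSet → v m ∈ f →
      (∀ x ∈ f, ∃ j, x = v j) → ∃ j, j ≠ m ∧ f = s(v m, v j) := by
    intro m f hfE hfm hall
    induction f with
    | _ x y =>
      have hAdj : (D (α i)).Adj x y := hfE
      rw [Sym2.mem_iff] at hfm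
      rcases hfm with h | h
      · obtain ⟨j, hj⟩ := hall y (by simp)
        subst h; subst hj
        exact ⟨j, fun hh => hAdj.ne (congrArg v hh.symm), rfl⟩
      · obtain ⟨j, hj⟩ := hall x (by simp)
        subst h; subst hj
        exact ⟨j, fun hh => hAdj.ne' (congrArg v hh.symm), Sym2.eq_swap⟩
  have r11 : i + 1 + 1 = i + 2 := by ring
  have r21 : i + 2 + 1 = i + 3 := by ring
  have r31 : i + 3 + 1 = i + 4 := by ring
  have r41 : i + 4 + 1 = i := by
    rw [add_assoc, show (4 : ZMod 5) + 1 = 0 from by decide, add_zero]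
  have r14 : i + 1 + 4 = i := by
    rw [add_assoc, show (1 : ZMod 5) + 4 = 0 from by decide, add_zero]
  have r12 : i + 1 + 2 = i + 3 := by ring
  have r13 : i + 1 + 3 = i + 4 := by ring
  have rsub : i - 1 = i + 4 := by
    rw [sub_eq_add_neg, show (-1 : ZMod 5) = 4 from by decide]
  have E2 : s(v (i+2), v (i+3)) ∈ (D (α (i+2))).edgeSet := by
    have := he (i+2); rwa [r21] at this
  have E3 : s(v (i+3), v (i+4)) ∈ (D (α (i+3))).edgeSet := by
    have := he (i+3); rwa [r31] at this
  have E4 : s(v (i+4), v i) ∈ (D (α (i+4))).edgeSet := by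
    have := he (i+4); rwa [r41] at this
  have E1 : s(v (i+1), v (i+2)) ∈ (D (α (i+1))).edgeSet := by
    have := he (i+1); rwa [r11] at this
  constructor
  · intro f hfE hfne hfi hall
    obtain ⟨j, hji, rfl⟩ := extract i f hfE hfi hall
    have hj : j = i + (j - i) := by ring
    rcases zmod5_cases (j - i) with h | h | h | h | h <;> rw [h] at hj <;> subst hj
    · exact absurd (add_zero i) hji
    · exact absurd rfl hfne
    · exfalso
      apply hno4
      exact four_cycle_exists D (v i) (v (i+2)) (v (i+3)) (v (i+4))
        (α i) (α (i+2)) (α (i+3)) (α (i+4))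
        (hv.ne (zmod5_shift_ne i (by decide)))
        (hv.ne (zmod5_shift_ne i (by decide)))
        (hv.ne (zmod5_shift_ne i (by decide)))
        (hv.ne (zmod5_add_ne i (by decide)))
        (hv.ne (zmod5_add_ne i (by decide)))
        (hv.ne (zmod5_add_ne i (by decide)))
        (hα.ne (zmod5_shift_ne i (by decide)))
        (hα.ne (zmod5_shift_ne i (by decide)))
        (hα.ne (zmod5_shift_ne i (by decide)))
        (hα.ne (zmod5_add_ne i (by decide)))
        (hα.ne (zmod5_add_ne i (by decide)))
        (hα.ne (zmod5_add_ne i (by decide)))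
        hfE E2 E3 E4
    · exact Or.inr rfl
    · left; rw [rsub, Sym2.eq_swap]
  · intro g hgE hgne hgi hall
    obtain ⟨j, hji, rfl⟩ := extract (i+1) g hgE hgi hall
    have hj : j = (i + 1) + (j - (i + 1)) := by ring
    rcases zmod5_cases (j - (i+1)) with h | h | h | h | h <;> rw [h] at hj <;> subst hj
    · exact absurd (add_zero (i+1)) hji
    · left; rw [r11]
    · right; rw [r12]
    · exfalso
      rw [r13] at hgE
      apply hno4
      exact four_cycle_exists D (v (i+1)) (v (i+2)) (v (i+3)) (v (i+4))
        (α (i+1)) (α (i+2)) (α (i+3)) (α i)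
        (hv.ne (zmod5_add_ne i (by decide)))
        (hv.ne (zmod5_add_ne i (by decide)))
        (hv.ne (zmod5_add_ne i (by decide)))
        (hv.ne (zmod5_add_ne i (by decide)))
        (hv.ne (zmod5_add_ne i (by decide)))
        (hv.ne (zmod5_add_ne i (by decide)))
        (hα.ne (zmod5_add_ne i (by decide)))
        (hα.ne (zmod5_add_ne i (by decide)))
        ((hα.ne (zmod5_shift_ne i (by decide))).symm)
        (hα.ne (zmod5_add_ne i (by decide)))
        ((hα.ne (zmod5_shift_ne i (by decide))).symm)
        ((hα.ne (zmod5_shift_ne i (by decide))).symm)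
        E1 E2 E3 (by rwa [Sym2.eq_swap] at hgE)
    · rw [r14] at hgne
      exact absurd (Sym2.eq_swap) hgne
end
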